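/- Let H be a universal family of hash functions h : D → F_2^t on a finite set D, and let (w_z)_{z ∈ D} be complex numbers with Σ_{z ∈ D} w_z = 0. Then the average over h ∈ H of Σ_{z' ∈ F_2^t} | Σ_{z : h(z) = z'} w_z |^2 equals (1 − 2^{-t}) · Σ_{z ∈ D} |w_z|^2. -/

import Mathlib

open Finset Complex

theorem universal_hash_cancellation_complex (D : Type*) [Fintype D] [DecidableEq D] (t : ℕ)
    (H : Finset (D → (Fin t → ZMod 2))) (hH : H.Nonempty)
    (huniv : ∀ z₁ z₂ : D, z₁ ≠ z₂ →
      (H.filter (fun h => h z₁ = h z₂)).card * 2 ^ t = H.card)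
    (w : D → ℂ) (hw : ∑ z, w z = 0) :
    ((1 : ℝ) / H.card) *
        ∑ h ∈ H, ∑ z' : Fin t → ZMod 2,
          ‖∑ z ∈ Finset.univ.filter (fun z => h z = z'), w z‖ ^ 2
      = (1 - 1 / 2 ^ t) * ∑ z, ‖w z‖ ^ 2 := by
  classical
  have h2t : ((2 : ℂ) ^ t) ≠ 0 := pow_ne_zero _ two_ne_zero
  -- Step 1: expand the square for each hash function
  have key : ∀ h : D → (Fin t → ZMod 2),
      ∑ z' : Fin t → ZMod 2,
        ‖∑ z ∈ Finset.univ.filter (fun z => h z = z'), w z‖ ^ 2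
      = (∑ z₁, ∑ z₂, (if h z₁ = h z₂ then w z₁ * (starRingEnd ℂ) (w z₂) else 0)).re := by
    intro h
    have step1 : ∀ z' : Fin t → ZMod 2,
        ‖∑ z ∈ Finset.univ.filter (fun z => h z = z'), w z‖ ^ 2
        = (∑ z₁ ∈ univ.filter (fun z => h z = z'), ∑ z₂ ∈ univ.filter (fun z => h z = z'),
            w z₁ * (starRingEnd ℂ) (w z₂)).re := by
      intro z'
      rw [Complex.sq_norm, ← Complex.ofReal_re (Complex.normSq _), ← Complex.mul_conj,
        map_sum, Finset.sum_mul_sum]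
    simp only [step1, ← Complex.re_sum]
    congr 1
    simp only [Finset.sum_filter]
    rw [Finset.sum_comm]
    refine Finset.sum_congr rfl fun z₁ _ => ?_
    rw [Finset.sum_ite_eq univ (h z₁)]
    simp [eq_comm]
  -- Step 2: average over H
  have main : ∑ h ∈ H, ∑ z₁, ∑ z₂, (if h z₁ = h z₂ then w z₁ * (starRingEnd ℂ) (w z₂) else 0)
      = ((H.card : ℂ) - (H.card : ℂ) / 2 ^ t) * ∑ z, (Complex.normSq (w z) : ℂ) := by
    rw [Finset.sum_comm]
    have inner : ∀ z₁ : D, ∑ h ∈ H, ∑ z₂, (if h z₁ = h z₂ then w z₁ * (starRingEnd ℂ) (w z₂) else 0)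
        = ∑ z₂, ((H.filter (fun h => h z₁ = h z₂)).card : ℂ) * (w z₁ * (starRingEnd ℂ) (w z₂)) := by
      intro z₁
      rw [Finset.sum_comm]
      refine Finset.sum_congr rfl fun z₂ _ => ?_
      rw [← Finset.sum_filter, Finset.sum_const, nsmul_eq_mul]
    simp only [inner]
    have cardval : ∀ z₁ z₂ : D,
        ((H.filter (fun h => h z₁ = h z₂)).card : ℂ)
        = if z₁ = z₂ then (H.card : ℂ) else (H.card : ℂ) / 2 ^ t := by
      intro z₁ z₂
      by_cases hz : z₁ = z₂
      · subst hz
        simp [Finset.filter_true_of_mem]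
      · rw [if_neg hz, eq_div_iff h2t]
        exact_mod_cast huniv z₁ z₂ hz
    simp only [cardval]
    have split : ∀ z₁ z₂ : D,
        (if z₁ = z₂ then (H.card : ℂ) else (H.card : ℂ) / 2 ^ t) * (w z₁ * (starRingEnd ℂ) (w z₂))
        = (H.card : ℂ) / 2 ^ t * (w z₁ * (starRingEnd ℂ) (w z₂))
          + (if z₁ = z₂ then ((H.card : ℂ) - (H.card : ℂ) / 2 ^ t) * (w z₁ * (starRingEnd ℂ) (w z₂)) else 0) := by
      intro z₁ z₂
      by_cases hz : z₁ = z₂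
      · subst hz; rw [if_pos rfl, if_pos rfl]; ring
      · simp [hz]
    simp only [split, Finset.sum_add_distrib]
    have first : ∑ z₁, ∑ z₂, (H.card : ℂ) / 2 ^ t * (w z₁ * (starRingEnd ℂ) (w z₂)) = 0 := by
      simp only [← Finset.mul_sum, ← Finset.sum_mul]
      rw [← map_sum, hw]
      simp
    rw [first, zero_add]
    have second : ∀ z₁ : D,
        ∑ z₂, (if z₁ = z₂ then ((H.card : ℂ) - (H.card : ℂ) / 2 ^ t) * (w z₁ * (starRingEnd ℂ) (w z₂)) else 0)
        = ((H.card : ℂ) - (H.card : ℂ) / 2 ^ t) * (Complex.normSq (w z₁) : ℂ) := by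
      intro z₁
      rw [Finset.sum_ite_eq univ z₁]
      simp [Complex.mul_conj]
    simp only [second]
    rw [← Finset.mul_sum]
  -- Assemble
  simp only [key, ← Complex.re_sum, main]
  have hcast : ((H.card : ℂ) - (H.card : ℂ) / 2 ^ t) * ∑ z, (Complex.normSq (w z) : ℂ)
      = ((((H.card : ℝ) - (H.card : ℝ) / 2 ^ t) * ∑ z, Complex.normSq (w z) : ℝ) : ℂ) := by
    push_cast
    ring
  rw [hcast, Complex.ofReal_re]
  have hcard : (H.card : ℝ) ≠ 0 := by
    exact_mod_cast Finset.card_ne_zero_of_mem hH.choose_spec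
  simp only [Complex.sq_norm]
  field_simp
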